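/- Let σ₀^k = 2^{−(k−1)} Σ_{i∈Ω₀^k} |φ_{i₁}⟩⟨φ_{i₁}| ⊗ ⋯ ⊗ |φ_{i_k}⟩⟨φ_{i_k}| and σ₁^k defined analogously over Ω₁^k, where |φ₀⟩ = |+⟩ and |φ₁⟩ = |1⟩. Then D(σ₀^k, σ₁^k) = (sin(π/4))^k = (√2/2)^k. -/

import Mathlib

open Matrix Kronecker ComplexOrder

/-- `|M| = √(Mᴴ M)`, the positive-semidefinite absolute value of a matrix. -/
noncomputable def matAbs {n : Type*} [Fintype n] [DecidableEq n]
    (M : Matrix n n ℂ) : Matrix n n ℂ :=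
  (Matrix.posSemidef_conjTranspose_mul_self M).1.eigenvectorUnitary.1 *
    diagonal ((↑) ∘ (√·) ∘ (Matrix.posSemidef_conjTranspose_mul_self M).1.eigenvalues) *
    (star (Matrix.posSemidef_conjTranspose_mul_self M).1.eigenvectorUnitary : Matrix n n ℂ)

/-- Trace distance `D(A,B) = (1/2) Tr |A - B|`. -/
noncomputable def traceDist {n : Type*} [Fintype n] [DecidableEq n]
    (A B : Matrix n n ℂ) : ℝ :=
  (1 / 2) * (Matrix.trace (matAbs (A - B))).re

/-- |+⟩⟨+| -/
noncomputable def projPlus : Matrix (Fin 2) (Fin 2) ℂ := !![1/2, 1/2; 1/2, 1/2]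

/-- |1⟩⟨1| -/
noncomputable def projOne : Matrix (Fin 2) (Fin 2) ℂ := !![0, 0; 0, 1]

/-- |φ₀⟩⟨φ₀| = |+⟩⟨+| and |φ₁⟩⟨φ₁| = |1⟩⟨1| -/
noncomputable def phiProj : Fin 2 → Matrix (Fin 2) (Fin 2) ℂ := ![projPlus, projOne]

/-- σ_b^k : equal mixture over Ω_b^k of ⊗_j |φ_{i_j}⟩⟨φ_{i_j}|. -/
noncomputable def sigmaMix (b : Fin 2) (k : ℕ) :
    Matrix (Fin k → Fin 2) (Fin k → Fin 2) ℂ :=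
  ((2 : ℂ) ^ (k - 1))⁻¹ •
    ∑ i ∈ Finset.univ.filter (fun i : Fin k → Fin 2 => ∑ j, i j = b),
      Matrix.of fun x y => ∏ j, phiProj (i j) (x j) (y j)

/-- the conjugate-coding states |r⟩_s : |0⟩₀=|0⟩, |1⟩₀=|1⟩, |0⟩₁=|+⟩, |1⟩₁=|−⟩. -/
noncomputable def cket (r s : Fin 2) : Fin 2 → ℂ :=
  if s = 0 then (if r = 0 then ![1, 0] else ![0, 1])
  else (if r = 0 then ![(Real.sqrt 2 / 2 : ℂ), (Real.sqrt 2 / 2 : ℂ)]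
        else ![(Real.sqrt 2 / 2 : ℂ), -(Real.sqrt 2 / 2 : ℂ)])

/-- |r⟩_s⟨r| -/
noncomputable def cProj (r s : Fin 2) : Matrix (Fin 2) (Fin 2) ℂ :=
  Matrix.vecMulVec (cket r s) (star (cket r s))

/-- ρ_b^k : equal mixture over keys s ∈ {0,1}^k and r ∈ Ω_b^k of ⊗_j |r_j⟩_{s_j}⟨r_j|. -/
noncomputable def rhoMix (b : Fin 2) (k : ℕ) :
    Matrix (Fin k → Fin 2) (Fin k → Fin 2) ℂ :=
  ((2 : ℂ) ^ (2 * k - 1))⁻¹ •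
    ∑ r ∈ Finset.univ.filter (fun r : Fin k → Fin 2 => ∑ j, r j = b),
      ∑ s : Fin k → Fin 2,
        Matrix.of fun x y => ∏ j, cProj (r j) (s j) (x j) (y j)

/-- the Hadamard matrix -/
noncomputable def Hmat : Matrix (Fin 2) (Fin 2) ℂ :=
  ((Real.sqrt 2 / 2 : ℝ) : ℂ) • !![1, 1; 1, -1]

/-- H⁰ = I and H¹ = H -/
noncomputable def Hpow : Fin 2 → Matrix (Fin 2) (Fin 2) ℂ := ![1, Hmat]

/-- H^{i₁} ⊗ ⋯ ⊗ H^{i_k} -/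
noncomputable def Hten {k : ℕ} (i : Fin k → Fin 2) :
    Matrix (Fin k → Fin 2) (Fin k → Fin 2) ℂ :=
  Matrix.of fun x y => ∏ j, Hpow (i j) (x j) (y j)

/-! ### auxiliary lemmas -/

noncomputable def eps : Fin 2 → ℂ := ![1, -1]

lemma eps_add (a b : Fin 2) : eps (a + b) = eps a * eps b := by
  fin_cases a <;> fin_cases b <;> simp [eps] <;> norm_num

lemma prod_eps {k : ℕ} (i : Fin k → Fin 2) :
    ∏ j, eps (i j) = eps (∑ j, i j) := by
  induction k with
  | zero => simp [eps]
  | succ n ih =>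
      rw [Fin.prod_univ_succ, Fin.sum_univ_succ, eps_add, ih]

noncomputable def Mdiff : Matrix (Fin 2) (Fin 2) ℂ := projPlus - projOne

lemma Mdiff_apply (a b : Fin 2) :
    Mdiff a b = ∑ r : Fin 2, eps r * phiProj r a b := by
  fin_cases a <;> fin_cases b <;>
    simp [Mdiff, projPlus, projOne, phiProj, eps, Fin.sum_univ_two] <;> norm_num

/-- the key difference identity -/
lemma sigma_diff (k : ℕ) :
    sigmaMix 0 k - sigmaMix 1 k =
      ((2 : ℂ) ^ (k - 1))⁻¹ •
        Matrix.of (fun x y : Fin k → Fin 2 => ∏ j, Mdiff (x j) (y j)) := by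
  rw [sigmaMix, sigmaMix, ← smul_sub]
  congr 1
  ext x y
  simp only [Matrix.sub_apply, Matrix.of_apply]
  have expand : ∏ j, Mdiff (x j) (y j)
      = ∑ i : Fin k → Fin 2, eps (∑ j, i j) * ∏ j, phiProj (i j) (x j) (y j) := by
    simp_rw [Mdiff_apply]
    rw [Finset.prod_univ_sum]
    rw [Fintype.piFinset_univ]
    refine Fintype.sum_congr _ _ fun i => ?_
    rw [Finset.prod_mul_distrib, prod_eps]
  rw [expand, ← Finset.sum_filter_add_sum_filter_not Finset.univ
    (fun i : Fin k → Fin 2 => ∑ j, i j = 0)]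
  have h1 : (Finset.univ.filter (fun i : Fin k → Fin 2 => ¬ ∑ j, i j = 0))
      = Finset.univ.filter (fun i : Fin k → Fin 2 => ∑ j, i j = 1) := by
    ext i
    simp only [Finset.mem_filter, Finset.mem_univ, true_and]
    have : ∀ a : Fin 2, (¬ a = 0) ↔ a = 1 := by decide
    exact this _
  rw [h1]
  simp only [Matrix.sum_apply, Matrix.of_apply]
  have hA : ∑ i ∈ Finset.univ.filter (fun i : Fin k → Fin 2 => ∑ j, i j = 0),
      eps (∑ j, i j) * ∏ j, phiProj (i j) (x j) (y j)
      = ∑ i ∈ Finset.univ.filter (fun i : Fin k → Fin 2 => ∑ j, i j = 0),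
        ∏ j, phiProj (i j) (x j) (y j) := by
    refine Finset.sum_congr rfl fun i hi => ?_
    rw [(Finset.mem_filter.mp hi).2]
    simp [eps]
  have hB : ∑ i ∈ Finset.univ.filter (fun i : Fin k → Fin 2 => ∑ j, i j = 1),
      eps (∑ j, i j) * ∏ j, phiProj (i j) (x j) (y j)
      = -∑ i ∈ Finset.univ.filter (fun i : Fin k → Fin 2 => ∑ j, i j = 1),
        ∏ j, phiProj (i j) (x j) (y j) := by
    rw [← Finset.sum_neg_distrib]
    refine Finset.sum_congr rfl fun i hi => ?_
    rw [(Finset.mem_filter.mp hi).2]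
    simp [eps]
  rw [hA, hB]
  ring

lemma star_Mdiff (a b : Fin 2) : star (Mdiff a b) = Mdiff b a := by
  fin_cases a <;> fin_cases b <;>
    simp [Mdiff, projPlus, projOne] <;> norm_num

lemma Mdiff_sq (a c : Fin 2) :
    ∑ b : Fin 2, Mdiff a b * Mdiff b c = (1/2 : ℂ) * (if a = c then 1 else 0) := by
  fin_cases a <;> fin_cases c <;>
    simp [Mdiff, projPlus, projOne, Fin.sum_univ_two] <;> norm_num

lemma T_sq (k : ℕ) :
    (Matrix.of (fun x y : Fin k → Fin 2 => ∏ j, Mdiff (x j) (y j)))ᴴ *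
      (Matrix.of (fun x y : Fin k → Fin 2 => ∏ j, Mdiff (x j) (y j)))
    = ((1/2 : ℂ)) ^ k • (1 : Matrix (Fin k → Fin 2) (Fin k → Fin 2) ℂ) := by
  ext x y
  rw [Matrix.mul_apply]
  simp only [Matrix.conjTranspose_apply, Matrix.of_apply, Matrix.smul_apply,
    Matrix.one_apply, smul_eq_mul]
  have step1 : ∀ z : Fin k → Fin 2,
      star (∏ j, Mdiff (z j) (x j)) * ∏ j, Mdiff (z j) (y j)
      = ∏ j, Mdiff (x j) (z j) * Mdiff (z j) (y j) := by
    intro z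
    rw [star_prod, ← Finset.prod_mul_distrib]
    refine Finset.prod_congr rfl fun j _ => ?_
    rw [star_Mdiff]
  simp_rw [step1]
  rw [← Fintype.piFinset_univ, Finset.sum_prod_piFinset Finset.univ (fun j b => Mdiff (x j) b * Mdiff b (y j))]
  have : ∀ j : Fin k, ∑ b : Fin 2, Mdiff (x j) b * Mdiff b (y j)
      = (1/2 : ℂ) * (if x j = y j then 1 else 0) := fun j => Mdiff_sq _ _
  simp_rw [this]
  rw [Finset.prod_mul_distrib, Finset.prod_const, Finset.card_univ, Fintype.card_fin]
  congr 1
  by_cases h : x = y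
  · subst h; simp
  · rw [if_neg h]
    obtain ⟨j, hj⟩ := Function.ne_iff.mp h
    exact Finset.prod_eq_zero (Finset.mem_univ j) (if_neg hj)

lemma matAbs_diff (k : ℕ) :
    matAbs (sigmaMix 0 k - sigmaMix 1 k)
      = (((Real.sqrt 2 / 2) ^ k / 2 ^ (k - 1) : ℝ) : ℂ) •
          (1 : Matrix (Fin k → Fin 2) (Fin k → Fin 2) ℂ) := by
  set d : ℝ := (Real.sqrt 2 / 2) ^ k / 2 ^ (k - 1) with hd
  have hd0 : 0 ≤ d := by positivity
  set Δ := sigmaMix 0 k - sigmaMix 1 k with hΔ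
  have hsq : ((d : ℂ) • (1 : Matrix (Fin k → Fin 2) (Fin k → Fin 2) ℂ)) ^ 2 = Δᴴ * Δ := by
    rw [hΔ, sigma_diff k, Matrix.conjTranspose_smul, Matrix.smul_mul, Matrix.mul_smul,
      T_sq k, smul_smul, smul_smul]
    rw [smul_pow, one_pow]
    congr 1
    have h2 : ((Real.sqrt 2 : ℝ) : ℂ) ^ 2 = 2 := by
      norm_cast
      exact Real.sq_sqrt (by norm_num)
    have hne : ((2 : ℂ) ^ (k - 1)) ≠ 0 := by positivity
    have : (d : ℂ) = (((Real.sqrt 2 : ℝ) : ℂ) / 2) ^ k / 2 ^ (k - 1) := by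
      rw [hd]; push_cast; ring
    rw [this]
    have hstar : star (((2 : ℂ) ^ (k - 1))⁻¹) = ((2 : ℂ) ^ (k - 1))⁻¹ := by
      simp
    rw [hstar]
    field_simp
    ring_nf
    have h3 : ((Real.sqrt 2 : ℝ) : ℂ) ^ (k * 2) = 2 ^ k := by
      rw [mul_comm, pow_mul, h2]
    have h4 : (2 : ℂ) ^ (k * 2) = 2 ^ k * 2 ^ k := by
      rw [pow_mul]; ring
    rw [mul_comm k 2, pow_mul, pow_mul, h2, ← mul_pow]; norm_num
  have hpsd : Matrix.PosSemidef ((d : ℂ) • (1 : Matrix (Fin k → Fin 2) (Fin k → Fin 2) ℂ)) := by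
    have h := Matrix.posSemidef_conjTranspose_mul_self
      (((Real.sqrt d : ℝ) : ℂ) • (1 : Matrix (Fin k → Fin 2) (Fin k → Fin 2) ℂ))
    have : (((Real.sqrt d : ℝ) : ℂ) • (1 : Matrix (Fin k → Fin 2) (Fin k → Fin 2) ℂ))ᴴ *
        (((Real.sqrt d : ℝ) : ℂ) • (1 : Matrix (Fin k → Fin 2) (Fin k → Fin 2) ℂ))
        = (d : ℂ) • 1 := by
      rw [Matrix.conjTranspose_smul, Matrix.conjTranspose_one, Matrix.smul_mul,
        Matrix.mul_smul, Matrix.one_mul, smul_smul, Complex.star_def, Complex.conj_ofReal,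
        ← Complex.ofReal_mul, Real.mul_self_sqrt hd0]
    rwa [this] at h
  rw [matAbs]
  have hA : Δᴴ * Δ = ((d ^ 2 : ℝ) : ℂ) • (1 : Matrix (Fin k → Fin 2) (Fin k → Fin 2) ℂ) := by
    rw [← hsq, smul_pow, one_pow]; push_cast; rfl
  have hH := (Matrix.posSemidef_conjTranspose_mul_self Δ).1
  have key2 := (congrArg (Unitary.conjStarAlgAut ℂ (Matrix (Fin k → Fin 2) (Fin k → Fin 2) ℂ)
    (star hH.eigenvectorUnitary)) hA).trans (by rw [map_smul, map_one])
  have heig : ∀ i, hH.eigenvalues i = d ^ 2 := fun i => by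
    have := congrFun (congrFun (hH.conjStarAlgAut_star_eigenvectorUnitary.symm.trans key2) i) i
    simp at this
    exact_mod_cast this
  have hdiag : diagonal ((↑) ∘ (√·) ∘ hH.eigenvalues)
      = (d : ℂ) • (1 : Matrix (Fin k → Fin 2) (Fin k → Fin 2) ℂ) := by
    ext i j
    by_cases hij : i = j
    · subst hij; simp [heig, Real.sqrt_sq hd0]
    · simp [hij]
  rw [hdiag, Matrix.mul_smul, mul_one, Matrix.smul_mul, Unitary.mul_star_self_of_mem (Subtype.prop _)]

theorem traceDist_sigmaMix (k : ℕ) (hk : 1 ≤ k) :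
    traceDist (sigmaMix 0 k) (sigmaMix 1 k) = Real.sin (Real.pi / 4) ^ k ∧
      Real.sin (Real.pi / 4) = Real.sqrt 2 / 2 := by
  have hsin : Real.sin (Real.pi / 4) = Real.sqrt 2 / 2 := Real.sin_pi_div_four
  refine ⟨?_, hsin⟩
  rw [traceDist, matAbs_diff k, Matrix.trace_smul, Matrix.trace_one]
  have hcard : (Fintype.card (Fin k → Fin 2) : ℂ) = (2 : ℂ) ^ k := by
    simp [Fintype.card_fun]
  rw [smul_eq_mul, hcard]
  have : ((((Real.sqrt 2 / 2) ^ k / 2 ^ (k - 1) : ℝ) : ℂ) * (2 : ℂ) ^ k).re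
      = ((Real.sqrt 2 / 2) ^ k / 2 ^ (k - 1)) * 2 ^ k := by
    have : ((2 : ℂ) ^ k) = (((2 : ℝ) ^ k : ℝ) : ℂ) := by push_cast; ring
    rw [this, ← Complex.ofReal_mul, Complex.ofReal_re]
  rw [this, hsin]
  have h2k : (2 : ℝ) ^ k = 2 * 2 ^ (k - 1) := by
    rw [← pow_succ']
    congr 1
    omega
  rw [h2k]
  have hne : (2 : ℝ) ^ (k - 1) ≠ 0 := by positivity
  field_simp
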